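/- Let c, β ∈ ℝ, b ∈ ℝ, ξ ∈ ℝ^N, a ∈ ℝ^N with |a| < 1, b = 2(a·ξ)(β+1), and let u : (0,∞) → ℂ be continuously differentiable with u, u' ∈ L²((0,∞), y^c dy) and u ∈ L²((0,∞), y^{c+2β} dy). Then |b ∫₀^∞ Re(ū(y) u'(y)) y^{c+β} dy| ≤ (|a|/√(1−|a|²)) ( ∫₀^∞ |u'(y)|² y^c dy + (β+1)² Q_a(ξ) ∫₀^∞ |u(y)|² y^{c+2β} dy ), where Q_a(ξ) = |ξ|² − |a·ξ|². -/

import Mathlib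

open Real MeasureTheory Set

private lemma young_aux {s t M q x z : ℝ} (ht : 0 ≤ t) (hM : 0 ≤ M) (hq : 0 ≤ q)
    (hx : 0 ≤ x) (hz : 0 ≤ z) (hkey : s ≤ M * q) :
    2 * s * t * (z * x) ≤ M * (x ^ 2 + t ^ 2 * q ^ 2 * z ^ 2) := by
  nlinarith [mul_nonneg hM (sq_nonneg (x - t * q * z)),
    mul_le_mul_of_nonneg_right hkey (by positivity : (0:ℝ) ≤ 2 * t * x * z)]

set_option maxHeartbeats 1000000 in
/-- Sectoriality estimate: for `b = 2(a·ξ)(β+1)` with `‖a‖ < 1`, and `u` continuously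
differentiable on `(0,∞)` with the stated weighted `L²` integrability, the "imaginary part"
term `|b ∫₀^∞ Re(ū u') y^{c+β} dy|` is bounded by `(‖a‖/√(1−‖a‖²))` times the
"real part" `∫₀^∞ |u'|² y^c dy + (β+1)² Q_a(ξ) ∫₀^∞ |u|² y^{c+2β} dy`. -/
theorem stmt_2 {N : ℕ} (c β b : ℝ) (a ξ : EuclideanSpace ℝ (Fin N)) (ha : ‖a‖ < 1)
    (hb : b = 2 * (inner ℝ a ξ : ℝ) * (β + 1))
    (u : ℝ → ℂ) (hu : ContDiffOn ℝ 1 u (Ioi 0))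
    (h1 : IntegrableOn (fun y : ℝ => ‖u y‖ ^ 2 * y ^ c) (Ioi 0))
    (h2 : IntegrableOn (fun y : ℝ => ‖deriv u y‖ ^ 2 * y ^ c) (Ioi 0))
    (h3 : IntegrableOn (fun y : ℝ => ‖u y‖ ^ 2 * y ^ (c + 2 * β)) (Ioi 0))
    (h4 : IntegrableOn
      (fun y : ℝ => ((starRingEnd ℂ) (u y) * deriv u y).re * y ^ (c + β)) (Ioi 0)) :
    |b * ∫ y in Ioi (0 : ℝ), ((starRingEnd ℂ) (u y) * deriv u y).re * y ^ (c + β)| ≤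
      ‖a‖ / Real.sqrt (1 - ‖a‖ ^ 2) *
        ((∫ y in Ioi (0 : ℝ), ‖deriv u y‖ ^ 2 * y ^ c) +
          (β + 1) ^ 2 * (‖ξ‖ ^ 2 - (inner ℝ a ξ : ℝ) ^ 2) *
            ∫ y in Ioi (0 : ℝ), ‖u y‖ ^ 2 * y ^ (c + 2 * β)) := by
  have hinner : |(inner ℝ a ξ : ℝ)| ≤ ‖a‖ * ‖ξ‖ := abs_real_inner_le_norm a ξ
  have ha0 : (0:ℝ) ≤ ‖a‖ := norm_nonneg a
  have hinner2 : (inner ℝ a ξ : ℝ) ^ 2 ≤ ‖a‖ ^ 2 * ‖ξ‖ ^ 2 := by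
    have := mul_self_le_mul_self (abs_nonneg _) hinner
    rw [abs_mul_abs_self] at this
    nlinarith
  have ha1 : ‖a‖ ^ 2 ≤ 1 := by nlinarith
  have hQ : (0:ℝ) ≤ ‖ξ‖ ^ 2 - (inner ℝ a ξ : ℝ) ^ 2 := by
    nlinarith [sq_nonneg ‖ξ‖]
  set Q : ℝ := ‖ξ‖ ^ 2 - (inner ℝ a ξ : ℝ) ^ 2 with hQdef
  have hroot : (0:ℝ) < Real.sqrt (1 - ‖a‖ ^ 2) := Real.sqrt_pos.2 (by nlinarith)
  set M : ℝ := ‖a‖ / Real.sqrt (1 - ‖a‖ ^ 2) with hMdef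
  have hM0 : 0 ≤ M := div_nonneg ha0 hroot.le
  -- key scalar inequality : |a·ξ| ≤ M √Q
  have hkey : |(inner ℝ a ξ : ℝ)| ≤ M * Real.sqrt Q := by
    rw [hMdef, div_mul_eq_mul_div, le_div_iff₀ hroot]
    have hsq : (inner ℝ a ξ : ℝ) ^ 2 * (1 - ‖a‖ ^ 2) ≤ ‖a‖ ^ 2 * Q := by
      rw [hQdef]; nlinarith
    have := Real.sqrt_le_sqrt hsq
    rwa [Real.sqrt_mul (sq_nonneg _), Real.sqrt_mul (sq_nonneg _),
      Real.sqrt_sq_eq_abs, Real.sqrt_sq ha0] at this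
  -- the two L² functions
  set f : ℝ → ℝ := fun y => Real.sqrt (‖u y‖ ^ 2 * y ^ (c + 2 * β)) with hfdef
  set g : ℝ → ℝ := fun y => Real.sqrt (‖deriv u y‖ ^ 2 * y ^ c) with hgdef
  have hmf : AEStronglyMeasurable f (volume.restrict (Ioi 0)) :=
    Real.continuous_sqrt.comp_aestronglyMeasurable h3.aestronglyMeasurable
  have hmg : AEStronglyMeasurable g (volume.restrict (Ioi 0)) :=
    Real.continuous_sqrt.comp_aestronglyMeasurable h2.aestronglyMeasurable
  have hf2 : (fun y => f y ^ 2) =ᵐ[volume.restrict (Ioi 0)]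
      fun y : ℝ => ‖u y‖ ^ 2 * y ^ (c + 2 * β) := by
    filter_upwards [ae_restrict_mem measurableSet_Ioi] with y hy
    exact Real.sq_sqrt (mul_nonneg (sq_nonneg _) (Real.rpow_nonneg (le_of_lt hy) _))
  have hg2 : (fun y => g y ^ 2) =ᵐ[volume.restrict (Ioi 0)]
      fun y : ℝ => ‖deriv u y‖ ^ 2 * y ^ c := by
    filter_upwards [ae_restrict_mem measurableSet_Ioi] with y hy
    exact Real.sq_sqrt (mul_nonneg (sq_nonneg _) (Real.rpow_nonneg (le_of_lt hy) _))
  have hMf : MemLp f 2 (volume.restrict (Ioi 0)) :=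
    (memLp_two_iff_integrable_sq hmf).2 (h3.congr hf2.symm)
  have hMg : MemLp g 2 (volume.restrict (Ioi 0)) :=
    (memLp_two_iff_integrable_sq hmg).2 (h2.congr hg2.symm)
  -- integrability of f*g
  have hfg_int : Integrable (fun y => f y * g y) (volume.restrict (Ioi 0)) := by
    refine Integrable.mono' (((h3.add h2).div_const 2)) (hmf.mul hmg) ?_
    filter_upwards [ae_restrict_mem measurableSet_Ioi] with y hy
    have hA : (0:ℝ) ≤ ‖u y‖ ^ 2 * y ^ (c + 2 * β) :=
      mul_nonneg (sq_nonneg _) (Real.rpow_nonneg (le_of_lt hy) _)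
    have hB : (0:ℝ) ≤ ‖deriv u y‖ ^ 2 * y ^ c :=
      mul_nonneg (sq_nonneg _) (Real.rpow_nonneg (le_of_lt hy) _)
    rw [Real.norm_of_nonneg (mul_nonneg (Real.sqrt_nonneg _) (Real.sqrt_nonneg _))]
    simp only [Pi.add_apply]
    nlinarith [Real.sq_sqrt hA, Real.sq_sqrt hB, sq_nonneg (f y - g y)]
  -- pointwise bound on the integrand
  have hptwise : ∀ᵐ y ∂(volume.restrict (Ioi (0:ℝ))),
      ‖((starRingEnd ℂ) (u y) * deriv u y).re * y ^ (c + β)‖ ≤ f y * g y := by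
    filter_upwards [ae_restrict_mem measurableSet_Ioi] with y hy
    have hy0 : (0:ℝ) < y := hy
    have hre : |((starRingEnd ℂ) (u y) * deriv u y).re| ≤ ‖u y‖ * ‖deriv u y‖ := by
      calc |((starRingEnd ℂ) (u y) * deriv u y).re|
          ≤ ‖(starRingEnd ℂ) (u y) * deriv u y‖ := Complex.abs_re_le_norm _
        _ = ‖(starRingEnd ℂ) (u y) * deriv u y‖ := rfl
        _ = ‖u y‖ * ‖deriv u y‖ := by rw [norm_mul, RCLike.norm_conj]
    have hfg : f y * g y = ‖u y‖ * ‖deriv u y‖ * y ^ (c + β) := by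
      have e : y ^ (c + 2 * β) * y ^ c = y ^ (c + β) * y ^ (c + β) := by
        rw [← Real.rpow_add hy0, ← Real.rpow_add hy0]; ring_nf
      have hmul : ‖u y‖ ^ 2 * y ^ (c + 2 * β) * (‖deriv u y‖ ^ 2 * y ^ c)
          = (‖u y‖ * ‖deriv u y‖ * y ^ (c + β)) ^ 2 := by
        calc ‖u y‖ ^ 2 * y ^ (c + 2 * β) * (‖deriv u y‖ ^ 2 * y ^ c)
            = ‖u y‖ ^ 2 * ‖deriv u y‖ ^ 2 * (y ^ (c + 2 * β) * y ^ c) := by ring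
          _ = ‖u y‖ ^ 2 * ‖deriv u y‖ ^ 2 * (y ^ (c + β) * y ^ (c + β)) := by rw [e]
          _ = (‖u y‖ * ‖deriv u y‖ * y ^ (c + β)) ^ 2 := by ring
      rw [hfdef, hgdef]
      rw [← Real.sqrt_mul (mul_nonneg (sq_nonneg _) (Real.rpow_nonneg hy0.le _)), hmul,
        Real.sqrt_sq (mul_nonneg (mul_nonneg (norm_nonneg _) (norm_nonneg _))
          (Real.rpow_nonneg hy0.le _))]
    rw [hfg, Real.norm_eq_abs, abs_mul, abs_of_nonneg (Real.rpow_nonneg hy0.le _)]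
    exact mul_le_mul_of_nonneg_right hre (Real.rpow_nonneg hy0.le _)
  -- Cauchy–Schwarz
  set I1 : ℝ := ∫ y in Ioi (0:ℝ), ‖deriv u y‖ ^ 2 * y ^ c with hI1def
  set I2 : ℝ := ∫ y in Ioi (0:ℝ), ‖u y‖ ^ 2 * y ^ (c + 2 * β) with hI2def
  have hI1 : 0 ≤ I1 := setIntegral_nonneg measurableSet_Ioi (fun y hy =>
    mul_nonneg (sq_nonneg _) (Real.rpow_nonneg (le_of_lt hy) _))
  have hI2 : 0 ≤ I2 := setIntegral_nonneg measurableSet_Ioi (fun y hy =>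
    mul_nonneg (sq_nonneg _) (Real.rpow_nonneg (le_of_lt hy) _))
  have hCS : ∫ y in Ioi (0:ℝ), f y * g y ≤ Real.sqrt I2 * Real.sqrt I1 := by
    have hconj : Real.HolderConjugate 2 2 := Real.HolderConjugate.two_two
    have hMf' : MemLp f (ENNReal.ofReal (2:ℝ)) (volume.restrict (Ioi 0)) := by
      rwa [ENNReal.ofReal_ofNat]
    have hMg' : MemLp g (ENNReal.ofReal (2:ℝ)) (volume.restrict (Ioi 0)) := by
      rwa [ENNReal.ofReal_ofNat]
    have h := integral_mul_le_Lp_mul_Lq_of_nonneg (μ := volume.restrict (Ioi (0:ℝ)))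
      hconj (f := f) (g := g)
      (Filter.Eventually.of_forall fun y => Real.sqrt_nonneg _)
      (Filter.Eventually.of_forall fun y => Real.sqrt_nonneg _) hMf' hMg'
    have e1 : ∫ y in Ioi (0:ℝ), f y ^ (2:ℝ) = I2 := by
      rw [hI2def]
      refine integral_congr_ae ?_
      filter_upwards [hf2] with y hy
      rw [← hy, show (2:ℝ) = ((2:ℕ):ℝ) by norm_num, Real.rpow_natCast]
    have e2 : ∫ y in Ioi (0:ℝ), g y ^ (2:ℝ) = I1 := by
      rw [hI1def]
      refine integral_congr_ae ?_
      filter_upwards [hg2] with y hy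
      rw [← hy, show (2:ℝ) = ((2:ℕ):ℝ) by norm_num, Real.rpow_natCast]
    rw [e1, e2] at h
    calc (∫ y in Ioi (0:ℝ), f y * g y) ≤ I2 ^ (1/2:ℝ) * I1 ^ (1/2:ℝ) := h
      _ = Real.sqrt I2 * Real.sqrt I1 := by rw [Real.sqrt_eq_rpow, Real.sqrt_eq_rpow]
  -- bound on the mixed integral
  have hJ : |∫ y in Ioi (0:ℝ), ((starRingEnd ℂ) (u y) * deriv u y).re * y ^ (c + β)|
      ≤ Real.sqrt I2 * Real.sqrt I1 := by
    rw [← Real.norm_eq_abs]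
    calc ‖∫ y in Ioi (0:ℝ), ((starRingEnd ℂ) (u y) * deriv u y).re * y ^ (c + β)‖
        ≤ ∫ y in Ioi (0:ℝ), ‖((starRingEnd ℂ) (u y) * deriv u y).re * y ^ (c + β)‖ :=
          norm_integral_le_integral_norm _
      _ ≤ ∫ y in Ioi (0:ℝ), f y * g y := integral_mono_ae h4.norm hfg_int hptwise
      _ ≤ Real.sqrt I2 * Real.sqrt I1 := hCS
  -- conclude with Young's inequality
  have habsb : |b| = 2 * |(inner ℝ a ξ : ℝ)| * |β + 1| := by
    rw [hb, abs_mul, abs_mul]; norm_num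
  have hyoung := young_aux (abs_nonneg (β + 1)) hM0 (Real.sqrt_nonneg Q)
    (Real.sqrt_nonneg I1) (Real.sqrt_nonneg I2) hkey
  rw [Real.sq_sqrt hI1, Real.sq_sqrt hI2, Real.sq_sqrt hQ, sq_abs] at hyoung
  calc |b * ∫ y in Ioi (0:ℝ), ((starRingEnd ℂ) (u y) * deriv u y).re * y ^ (c + β)|
      = 2 * |(inner ℝ a ξ : ℝ)| * |β + 1| *
        |∫ y in Ioi (0:ℝ), ((starRingEnd ℂ) (u y) * deriv u y).re * y ^ (c + β)| := by
        rw [abs_mul, habsb]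
    _ ≤ 2 * |(inner ℝ a ξ : ℝ)| * |β + 1| * (Real.sqrt I2 * Real.sqrt I1) := by
        apply mul_le_mul_of_nonneg_left hJ; positivity
    _ ≤ M * (I1 + (β + 1) ^ 2 * Q * I2) := hyoung
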